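/- If P and Q are projections on a complex Hilbert space H with ‖P − Q‖ < 1 in the operator norm, then P and Q are unitarily equivalent. -/

import Mathlib

set_option maxHeartbeats 1000000
set_option synthInstance.maxHeartbeats 1000000

variable {H : Type*} [NormedAddCommGroup H] [InnerProductSpace ℂ H] [CompleteSpace H]

theorem projections_unitarily_equivalent_of_dist_lt_one
    (P Q : H →L[ℂ] H) (hP : IsSelfAdjoint P) (hP2 : IsIdempotentElem P)
    (hQ : IsSelfAdjoint Q) (hQ2 : IsIdempotentElem Q)
    (h : ‖P - Q‖ < 1) :
    ∃ U ∈ unitary (H →L[ℂ] H), Q = U * P * star U := by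
  set W : H →L[ℂ] H := Q * P + (1 - Q) * (1 - P) with hWdef
  have h1P : (1 - P) * P = 0 := by simp [sub_mul, hP2.eq]
  have hQ1 : Q * (1 - Q) = 0 := by simp [mul_sub, hQ2.eq]
  have hWP : W * P = Q * P := by
    rw [hWdef, add_mul, mul_assoc Q P P, hP2.eq, mul_assoc, h1P, mul_zero, add_zero]
  have hQW : Q * W = Q * P := by
    rw [hWdef, mul_add, ← mul_assoc Q Q P, hQ2.eq, ← mul_assoc, hQ1, zero_mul, add_zero]
  have hWPQ : W * P = Q * W := hWP.trans hQW.symm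
  -- the symmetry 2Q - 1 has norm ≤ 1
  have hDsq : (Q + Q - 1) * (Q + Q - 1) = 1 := by
    simp only [add_mul, mul_add, sub_mul, mul_sub, one_mul, mul_one, hQ2.eq]
    abel
  have hDsa : star (Q + Q - 1) = Q + Q - 1 := by simp [hQ.star_eq]
  have hDnorm : ‖Q + Q - 1‖ ≤ 1 := by
    have hc := CStarRing.norm_star_mul_self (x := Q + Q - 1)
    rw [hDsa, hDsq] at hc
    have hone : ‖(1 : H →L[ℂ] H)‖ ≤ 1 := by
      rw [ContinuousLinearMap.one_def]; exact ContinuousLinearMap.norm_id_le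
    nlinarith [norm_nonneg (Q + Q - 1)]
  have hW1 : ‖1 - W‖ < 1 := by
    have hfac : W - 1 = (Q + Q - 1) * (P - Q) := by
      rw [hWdef]
      simp only [add_mul, mul_add, sub_mul, mul_sub, one_mul, mul_one, hQ2.eq]
      abel
    calc ‖1 - W‖ = ‖W - 1‖ := by rw [norm_sub_rev]
    _ = ‖(Q + Q - 1) * (P - Q)‖ := by rw [hfac]
    _ ≤ ‖Q + Q - 1‖ * ‖P - Q‖ := norm_mul_le _ _
    _ ≤ 1 * ‖P - Q‖ := by gcongr
    _ < 1 := by rw [one_mul]; exact h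
  have hWu : IsUnit W := by
    have := (Units.oneSub (1 - W) hW1).isUnit
    simpa using this
  have hPW' : P * star W = star W * Q := by
    have := congrArg star hWPQ
    simp only [star_mul, hP.star_eq, hQ.star_eq] at this
    exact this
  set S : H →L[ℂ] H := star W * W with hSdef
  have hS : (0 : H →L[ℂ] H) ≤ S := star_mul_self_nonneg W
  have hSu : IsUnit S := hWu.star.mul hWu
  have hPS : P * S = S * P := by
    rw [hSdef, ← mul_assoc, hPW', mul_assoc, ← hWPQ, ← mul_assoc]
  set R : H →L[ℂ] H := CFC.sqrt S with hRdef
  have hR : (0 : H →L[ℂ] H) ≤ R := CFC.sqrt_nonneg S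
  have hRsa : IsSelfAdjoint R := .of_nonneg hR
  have hRR : R * R = S := CFC.sqrt_mul_sqrt_self S hS
  -- symmetry V = 2P - 1 commutes with S, hence with R = sqrt S
  have hVsa : star (P + P - 1) = P + P - 1 := by simp [hP.star_eq]
  have hV2 : (P + P - 1) * (P + P - 1) = 1 := by
    simp only [add_mul, mul_add, sub_mul, mul_sub, one_mul, mul_one, hP2.eq]
    abel
  have hVSV : (P + P - 1) * S * (P + P - 1) = S := by
    have hVS : (P + P - 1) * S = S * (P + P - 1) := by
      simp only [add_mul, mul_add, sub_mul, mul_sub, one_mul, mul_one, hPS]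
    rw [hVS, mul_assoc, hV2, mul_one]
  have hVRV : (P + P - 1) * R * (P + P - 1) = R := by
    have h1 : (0 : H →L[ℂ] H) ≤ (P + P - 1) * R * (P + P - 1) := by
      have := star_left_conjugate_nonneg hR (P + P - 1)
      rwa [hVsa] at this
    have h2 : ((P + P - 1) * R * (P + P - 1)) * ((P + P - 1) * R * (P + P - 1)) = S := by
      have e : ((P + P - 1) * R * (P + P - 1)) * ((P + P - 1) * R * (P + P - 1))
          = (P + P - 1) * (R * ((P + P - 1) * (P + P - 1)) * R) * (P + P - 1) := by
        simp only [mul_assoc]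
      rw [e, hV2, mul_one, hRR, hVSV]
    have := CFC.sqrt_unique h2 h1
    rw [← hRdef] at this
    exact this.symm
  have hVR : (P + P - 1) * R = R * (P + P - 1) := by
    calc (P + P - 1) * R = (P + P - 1) * R * ((P + P - 1) * (P + P - 1)) := by
          rw [hV2, mul_one]
    _ = ((P + P - 1) * R * (P + P - 1)) * (P + P - 1) := by simp only [mul_assoc]
    _ = R * (P + P - 1) := by rw [hVRV]
  have hPR : P * R = R * P := by
    have hsum : P * R + P * R = R * P + R * P := by
      have h' := hVR
      simp only [add_mul, mul_add, sub_mul, mul_sub, one_mul, mul_one] at h'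
      exact sub_left_inj.mp h'
    have h2 : (2 : ℂ) • (P * R) = (2 : ℂ) • (R * P) := by
      rw [two_smul, two_smul]; exact hsum
    exact smul_right_injective _ (by norm_num : (2:ℂ) ≠ 0) h2
  -- R is a unit
  have hRS : R * S = S * R := by
    rw [← hRR]; simp only [mul_assoc]
  have hRu : IsUnit R := by
    have hcom : Commute R (hSu.unit : H →L[ℂ] H) := by
      rw [IsUnit.unit_spec]; exact hRS
    have hcom' : R * ↑hSu.unit⁻¹ = ↑hSu.unit⁻¹ * R := hcom.units_inv_right.eq
    refine ⟨⟨R, R * ↑hSu.unit⁻¹, ?_, ?_⟩, rfl⟩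
    · rw [← mul_assoc, hRR]
      exact hSu.mul_val_inv
    · rw [hcom', mul_assoc, hRR]
      exact hSu.val_inv_mul
  set T : H →L[ℂ] H := ↑hRu.unit⁻¹ with hTdef
  have hRT : R * T = 1 := hRu.mul_val_inv
  have hTR : T * R = 1 := hRu.val_inv_mul
  have hTsa : IsSelfAdjoint T := by
    have h1 : star T * R = 1 := by
      have := congrArg star hRT
      simpa [hRsa.star_eq] using this
    calc star T = star T * (R * T) := by rw [hRT, mul_one]
    _ = (star T * R) * T := by rw [mul_assoc]
    _ = T := by rw [h1, one_mul]
  have hPT : P * T = T * P := by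
    calc P * T = T * R * P * T := by rw [hTR, one_mul]
    _ = T * (R * P) * T := by rw [mul_assoc T R P]
    _ = T * (P * R) * T := by rw [hPR]
    _ = T * P * (R * T) := by simp only [mul_assoc]
    _ = T * P := by rw [hRT, mul_one]
  have hTTS : T * T * S = 1 := by
    calc T * T * S = T * (T * R) * R := by rw [← hRR]; simp only [mul_assoc]
    _ = 1 := by rw [hTR, mul_one, hTR]
  set U : H →L[ℂ] H := W * T with hUdef
  have hstarU : star U = T * star W := by rw [hUdef, star_mul, hTsa.star_eq]
  have hUU : star U * U = 1 := by
    rw [hstarU, hUdef]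
    calc T * star W * (W * T) = T * S * T := by rw [hSdef]; simp only [mul_assoc]
    _ = T * (R * R) * T := by rw [hRR]
    _ = T * R * (R * T) := by simp only [mul_assoc]
    _ = 1 := by rw [hTR, hRT, one_mul]
  have hUU' : U * star U = 1 := by
    have hleft : (T * T * star W) * W = 1 := by
      rw [mul_assoc, ← hSdef]; exact hTTS
    have he : U * star U = W * (T * T * star W) := by
      rw [hUdef, hstarU]; simp only [mul_assoc]
    rw [he]
    calc W * (T * T * star W)
        = W * (T * T * star W) * (W * ↑hWu.unit⁻¹) := by rw [hWu.mul_val_inv, mul_one]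
    _ = W * ((T * T * star W) * W) * ↑hWu.unit⁻¹ := by simp only [mul_assoc]
    _ = 1 := by rw [hleft, mul_one, hWu.mul_val_inv]
  refine ⟨U, Unitary.mem_iff.mpr ⟨hUU, hUU'⟩, ?_⟩
  calc Q = Q * (U * star U) := by rw [hUU', mul_one]
  _ = Q * W * (T * (T * star W)) := by rw [hUdef, hstarU]; simp only [mul_assoc]
  _ = W * P * (T * (T * star W)) := by rw [← hWPQ]
  _ = W * (P * T) * (T * star W) := by simp only [mul_assoc]
  _ = W * (T * P) * (T * star W) := by rw [hPT]
  _ = U * P * star U := by rw [hUdef, hstarU]; simp only [mul_assoc]
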